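/- arXiv:1509.00987 — 2 statements merged into one kernel-verified Lean document; each statement's English description precedes it below -/
import Mathlib

section
/- Let n ≥ 1 and N ≥ 1 be integers, and let μ be a finite Borel measure on ℂ^N with bounded support for which there are constants C₀ > 0 and R > 0 with μ(B_ρ(w)) ≤ C₀ ρ^{2n} for every w ∈ ℂ^N and every 0 < ρ ≤ R. Fix an integer 0 ≤ γ < 2n, a coordinate index i ∈ {1, …, N}, and define the kernel k̃_γ(ζ, z) := ( ‖z‖^γ / ‖ζ‖^γ ) · conj(ζ_i − z_i) / ‖ζ − z‖^{2n}. Then for every 0 ≤ α < 1 and every R₀ > 0 there exists a constant C > 0 such that for all z, w in the closed ball of radius R₀ about the origin with z ≠ w, z ≠ 0 ≠ w, one has ∫ |k̃_γ(ζ, z) − k̃_γ(ζ, w)| dμ(ζ) ≤ C · ‖z − w‖^α. -/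
open MeasureTheory Metric
open scoped NNReal ENNReal

lemma pow_sub_pow_le_aux (x y : ℝ) (hy : 0 ≤ y) (hxy : y ≤ x) (k : ℕ) :
    x ^ k - y ^ k ≤ k * x ^ (k - 1) * (x - y) := by
  have hx : 0 ≤ x := hy.trans hxy
  rw [← geom_sum₂_mul]
  have hsum : (∑ i ∈ Finset.range k, x ^ i * y ^ (k - 1 - i)) ≤ k * x ^ (k - 1) := by
    calc (∑ i ∈ Finset.range k, x ^ i * y ^ (k - 1 - i))
        ≤ ∑ _i ∈ Finset.range k, x ^ (k - 1) := by
          apply Finset.sum_le_sum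
          intro i hi
          have hik : i ≤ k - 1 := Nat.le_pred_of_lt (Finset.mem_range.mp hi)
          calc x ^ i * y ^ (k - 1 - i) ≤ x ^ i * x ^ (k - 1 - i) := by
                apply mul_le_mul_of_nonneg_left _ (pow_nonneg hx _)
                exact pow_le_pow_left₀ hy hxy _
            _ = x ^ (k - 1) := by rw [← pow_add, Nat.add_sub_cancel' hik]
      _ = k * x ^ (k - 1) := by
          rw [Finset.sum_const, Finset.card_range, nsmul_eq_mul]
  exact mul_le_mul_of_nonneg_right hsum (by linarith)

lemma abs_pow_sub_pow_le' (x y : ℝ) (hx : 0 ≤ x) (hy : 0 ≤ y) (k : ℕ) :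
    |x ^ k - y ^ k| ≤ k * max x y ^ (k - 1) * |x - y| := by
  rcases le_total y x with h | h
  · rw [abs_of_nonneg (sub_nonneg.mpr h),
      abs_of_nonneg (sub_nonneg.mpr (pow_le_pow_left₀ hy h k)), max_eq_left h]
    exact pow_sub_pow_le_aux x y hy h k
  · rw [abs_sub_comm, abs_sub_comm x y,
      abs_of_nonneg (sub_nonneg.mpr h),
      abs_of_nonneg (sub_nonneg.mpr (pow_le_pow_left₀ hx h k)), max_eq_right h]
    exact pow_sub_pow_le_aux y x hx h k

lemma match_bound (γ t : ℕ) (hγt : γ ≤ t) (a c e : ℝ) (ha : 0 ≤ a) (hc : 0 < c)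
    (he : 0 < e) (hrel : a - c ≤ e) :
    a ^ γ / c ^ γ * (1 / e ^ t) ≤ 2 ^ γ * (1 / e ^ t) + 2 ^ γ * (1 / c ^ t) := by
  rcases le_or_gt a (2 * c) with hca | hca
  · have h1 : a ^ γ / c ^ γ ≤ 2 ^ γ := by
      rw [div_le_iff₀ (by positivity)]
      calc a ^ γ ≤ (2 * c) ^ γ := pow_le_pow_left₀ ha hca γ
        _ = 2 ^ γ * c ^ γ := mul_pow 2 c γ
    have h2 : a ^ γ / c ^ γ * (1 / e ^ t) ≤ 2 ^ γ * (1 / e ^ t) :=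
      mul_le_mul_of_nonneg_right h1 (by positivity)
    have h3 : (0:ℝ) ≤ 2 ^ γ * (1 / c ^ t) := by positivity
    linarith
  · have hce : c < e := by linarith
    have hae : a ≤ 2 * e := by linarith
    have h1 : a ^ γ / c ^ γ * (1 / e ^ t) ≤ 2 ^ γ * (1 / c ^ t) := by
      have key : a ^ γ * c ^ t ≤ 2 ^ γ * (c ^ γ * e ^ t) := by
        have e1 : e ^ t = e ^ γ * e ^ (t - γ) := by
          rw [← pow_add, Nat.add_sub_cancel' hγt]
        have e2 : c ^ t = c ^ γ * c ^ (t - γ) := by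
          rw [← pow_add, Nat.add_sub_cancel' hγt]
        calc a ^ γ * c ^ t ≤ (2 * e) ^ γ * (c ^ γ * c ^ (t - γ)) := by
              rw [← e2]
              exact mul_le_mul_of_nonneg_right (pow_le_pow_left₀ ha hae γ) (by positivity)
          _ = 2 ^ γ * (c ^ γ * (e ^ γ * c ^ (t - γ))) := by rw [mul_pow]; ring
          _ ≤ 2 ^ γ * (c ^ γ * (e ^ γ * e ^ (t - γ))) := by gcongr
          _ = 2 ^ γ * (c ^ γ * e ^ t) := by rw [← e1]
      rw [div_mul_div_comm, mul_one, div_le_iff₀ (by positivity)]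
      calc a ^ γ ≤ 2 ^ γ * (c ^ γ * e ^ t) / c ^ t := by
            rw [le_div_iff₀ (by positivity)]; linarith
        _ = 2 ^ γ * (1 / c ^ t) * (c ^ γ * e ^ t) := by ring
    have h3 : (0:ℝ) ≤ 2 ^ γ * (1 / e ^ t) := by positivity
    linarith

lemma coord_le_norm {N : ℕ} (x : EuclideanSpace ℂ (Fin N)) (i : Fin N) : ‖x i‖ ≤ ‖x‖ := by
  rw [EuclideanSpace.norm_eq]
  have h1 : ‖x i‖ = Real.sqrt (‖x i‖ ^ 2) := (Real.sqrt_sq (norm_nonneg _)).symm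
  rw [h1]
  exact Real.sqrt_le_sqrt
    (Finset.single_le_sum (f := fun j => ‖x j‖ ^ 2) (fun j _ => sq_nonneg _)
      (Finset.mem_univ i))

lemma norm_kernel_term (p D : ℝ) (x : ℂ) (hp : 0 ≤ p) (hD : 0 ≤ D) :
    ‖(p : ℂ) * (starRingEnd ℂ) x / (D : ℂ)‖ = p * ‖x‖ / D := by
  rw [norm_div, norm_mul, Complex.norm_real, Complex.norm_real, RCLike.norm_conj,
    Real.norm_of_nonneg hp, Real.norm_of_nonneg hD]

-- the key pointwise estimate, assuming ‖w‖ ≤ ‖z‖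
set_option maxHeartbeats 1000000 in
lemma key_pointwise (n γ : ℕ) (hn : 1 ≤ n) (hγ : γ < 2 * n) {N : ℕ} (i : Fin N)
    (α : ℝ) (hα0 : 0 ≤ α) (hα1 : α < 1)
    (z w ζ : EuclideanSpace ℂ (Fin N)) (hwz : ‖w‖ ≤ ‖z‖)
    (hz : ζ ≠ z) (hw : ζ ≠ w) (h0 : ζ ≠ 0) :
    ‖((‖z‖ ^ γ / ‖ζ‖ ^ γ : ℝ) : ℂ) * (starRingEnd ℂ) (ζ i - z i) /
        ((‖ζ - z‖ ^ (2 * n) : ℝ) : ℂ)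
      - ((‖w‖ ^ γ / ‖ζ‖ ^ γ : ℝ) : ℂ) * (starRingEnd ℂ) (ζ i - w i) /
        ((‖ζ - w‖ ^ (2 * n) : ℝ) : ℂ)‖
    ≤ ((2:ℝ) ^ (γ + 2) * ((γ:ℝ) * 2 ^ (γ - 1) + (2 * (n:ℝ) + 1) * 2 ^ (γ + 1)))
        * ‖z - w‖ ^ α *
      (‖ζ - z‖ ^ (-(2 * (n:ℝ) - 1 + α)) + ‖ζ - w‖ ^ (-(2 * (n:ℝ) - 1 + α))
        + ‖ζ‖ ^ (-(2 * (n:ℝ) - 1 + α))) := by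
  set d1 : ℝ := ‖ζ - z‖ with hd1def
  set d2 : ℝ := ‖ζ - w‖ with hd2def
  set d0 : ℝ := ‖ζ‖ with hd0def
  set r : ℝ := ‖z - w‖ with hrdef
  have hd1 : 0 < d1 := by simpa [hd1def] using norm_pos_iff.mpr (sub_ne_zero.mpr hz)
  have hd2 : 0 < d2 := by simpa [hd2def] using norm_pos_iff.mpr (sub_ne_zero.mpr hw)
  have hd0 : 0 < d0 := by simpa [hd0def] using norm_pos_iff.mpr h0
  have hr0 : 0 ≤ r := norm_nonneg _
  set m : ℝ := min d1 (min d2 d0) with hmdef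
  have hm : 0 < m := lt_min hd1 (lt_min hd2 hd0)
  have hmd1 : m ≤ d1 := min_le_left _ _
  have hmd2 : m ≤ d2 := le_trans (min_le_right _ _) (min_le_left _ _)
  have hmd0 : m ≤ d0 := le_trans (min_le_right _ _) (min_le_right _ _)
  have hrel1 : ‖z‖ - d0 ≤ d1 := by
    simpa [hd0def, hd1def, norm_sub_rev z ζ] using norm_sub_norm_le z ζ
  have hrel2 : ‖w‖ - d0 ≤ d2 := by
    simpa [hd0def, hd2def, norm_sub_rev w ζ] using norm_sub_norm_le w ζ
  set pz : ℝ := ‖z‖ ^ γ / d0 ^ γ with hpzdef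
  set pw : ℝ := ‖w‖ ^ γ / d0 ^ γ with hpwdef
  have hpz0 : 0 ≤ pz := by positivity
  have hpw0 : 0 ≤ pw := by positivity
  have hpwz : pw ≤ pz := by
    apply div_le_div_of_nonneg_right ?_ (by positivity)
    · exact pow_le_pow_left₀ (norm_nonneg w) hwz γ
  set a : ℂ := ζ i - z i with hadef
  set b : ℂ := ζ i - w i with hbdef
  have hna : ‖a‖ ≤ d1 := by
    have := coord_le_norm (ζ - z) i
    simpa [hadef, hd1def] using this
  have hnb : ‖b‖ ≤ d2 := by
    have := coord_le_norm (ζ - w) i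
    simpa [hbdef, hd2def] using this
  have hnab : ‖a - b‖ ≤ r := by
    have h1 : a - b = (w - z) i := by simp [hadef, hbdef]
    rw [h1]
    have := coord_le_norm (w - z) i
    simpa [hrdef, norm_sub_rev w z] using this
  set D1 : ℂ := ((d1 ^ (2*n) : ℝ) : ℂ) with hD1def
  set D2 : ℂ := ((d2 ^ (2*n) : ℝ) : ℂ) with hD2def
  have hD1ne : D1 ≠ 0 := by
    simp only [hD1def, ne_eq, Complex.ofReal_eq_zero]
    positivity
  have hD2ne : D2 ≠ 0 := by
    simp only [hD2def, ne_eq, Complex.ofReal_eq_zero]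
    positivity
  set X : ℝ := ‖(pz:ℂ) * (starRingEnd ℂ) a / D1 - (pw:ℂ) * (starRingEnd ℂ) b / D2‖ with hXdef
  have hX0 : 0 ≤ X := by rw [hXdef]; exact norm_nonneg _
  clear_value d1 d2 d0 r m pz pw a b D1 D2 X
  clear hz hw h0
  -- division helpers
  have hdivz : ∀ p : ℝ, 0 ≤ p → p * d1 / d1 ^ (2*n) = p * (1 / d1 ^ (2*n-1)) := by
    intro p hp
    have h2 : d1 ^ (2*n) = d1 ^ (2*n-1) * d1 := by
      rw [← pow_succ]
      congr 1
      omega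
    rw [h2]
    field_simp
  -- Bound (I)
  have honem1 : (1:ℝ)/d1^(2*n-1) ≤ 1/m^(2*n-1) :=
    one_div_le_one_div_of_le (pow_pos hm _) (pow_le_pow_left₀ hm.le hmd1 _)
  have honem2 : (1:ℝ)/d2^(2*n-1) ≤ 1/m^(2*n-1) :=
    one_div_le_one_div_of_le (pow_pos hm _) (pow_le_pow_left₀ hm.le hmd2 _)
  have honem0 : (1:ℝ)/d0^(2*n-1) ≤ 1/m^(2*n-1) :=
    one_div_le_one_div_of_le (pow_pos hm _) (pow_le_pow_left₀ hm.le hmd0 _)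
  have honem1' : (1:ℝ)/d1^(2*n) ≤ 1/m^(2*n) :=
    one_div_le_one_div_of_le (pow_pos hm _) (pow_le_pow_left₀ hm.le hmd1 _)
  have honem2' : (1:ℝ)/d2^(2*n) ≤ 1/m^(2*n) :=
    one_div_le_one_div_of_le (pow_pos hm _) (pow_le_pow_left₀ hm.le hmd2 _)
  have honem0' : (1:ℝ)/d0^(2*n) ≤ 1/m^(2*n) :=
    one_div_le_one_div_of_le (pow_pos hm _) (pow_le_pow_left₀ hm.le hmd0 _)
  have h2γ : (0:ℝ) ≤ 2^γ := by positivity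
  have e2γ : (2:ℝ)^(γ+1) = 2^γ + 2^γ := by rw [pow_succ]; ring
  have hKz : ‖(pz:ℂ) * (starRingEnd ℂ) a / D1‖ ≤ 2^(γ+1) * (1/m^(2*n-1)) := by
    rw [hD1def, norm_kernel_term _ _ _ hpz0 (by positivity)]
    have step1 : pz * ‖a‖ / d1 ^ (2*n) ≤ pz * (1 / d1 ^ (2*n-1)) := by
      rw [← hdivz pz hpz0]
      gcongr
    refine step1.trans ?_
    have step2 := match_bound γ (2*n-1) (by omega) ‖z‖ d0 d1 (norm_nonneg z) hd0 hd1 hrel1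
    rw [hpzdef]
    refine step2.trans ?_
    rw [e2γ]
    have g1 := mul_le_mul_of_nonneg_left honem1 h2γ
    have g2 := mul_le_mul_of_nonneg_left honem0 h2γ
    linarith
  have hKw : ‖(pw:ℂ) * (starRingEnd ℂ) b / D2‖ ≤ 2^(γ+1) * (1/m^(2*n-1)) := by
    rw [hD2def, norm_kernel_term _ _ _ hpw0 (by positivity)]
    have h2 : d2 ^ (2*n) = d2 ^ (2*n-1) * d2 := by
      rw [← pow_succ]
      congr 1
      omega
    have step1 : pw * ‖b‖ / d2 ^ (2*n) ≤ pw * (1 / d2 ^ (2*n-1)) := by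
      have e : pw * d2 / d2 ^ (2*n) = pw * (1 / d2 ^ (2*n-1)) := by
        rw [h2]
        field_simp
      rw [← e]
      gcongr
    refine step1.trans ?_
    have step2 := match_bound γ (2*n-1) (by omega) ‖w‖ d0 d2 (norm_nonneg w) hd0 hd2 hrel2
    rw [hpwdef]
    refine step2.trans ?_
    rw [e2γ]
    have g1 := mul_le_mul_of_nonneg_left honem2 h2γ
    have g2 := mul_le_mul_of_nonneg_left honem0 h2γ
    linarith
  have hI : X ≤ 2^(γ+2) * (1/m^(2*n-1)) := by
    rw [hXdef]
    refine (norm_sub_le _ _).trans ?_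
    have e4 : (2:ℝ)^(γ+2) = 2^(γ+1) + 2^(γ+1) := by rw [pow_succ]; ring
    rw [e4]
    linarith [hKz, hKw]
  -- matching bounds with exponent 2n
  have matchz2n : pz * (1/d1^(2*n)) ≤ 2^(γ+1) * (1/m^(2*n)) := by
    have step2 := match_bound γ (2*n) (by omega) ‖z‖ d0 d1 (norm_nonneg z) hd0 hd1 hrel1
    rw [hpzdef]
    refine step2.trans ?_
    rw [e2γ]
    have g1 := mul_le_mul_of_nonneg_left honem1' h2γ
    have g2 := mul_le_mul_of_nonneg_left honem0' h2γ
    linarith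
  have matchw2n : pw * (1/d2^(2*n)) ≤ 2^(γ+1) * (1/m^(2*n)) := by
    have step2 := match_bound γ (2*n) (by omega) ‖w‖ d0 d2 (norm_nonneg w) hd0 hd2 hrel2
    rw [hpwdef]
    refine step2.trans ?_
    rw [e2γ]
    have g1 := mul_le_mul_of_nonneg_left honem2' h2γ
    have g2 := mul_le_mul_of_nonneg_left honem0' h2γ
    linarith
  -- Bound (II): decomposition
  have hdecomp : (pz:ℂ) * (starRingEnd ℂ) a / D1 - (pw:ℂ) * (starRingEnd ℂ) b / D2
      = ((pz:ℂ) - (pw:ℂ)) * (starRingEnd ℂ) a / D1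
        + ((pw:ℂ) * ((starRingEnd ℂ) a - (starRingEnd ℂ) b) / D1
          + (pw:ℂ) * (starRingEnd ℂ) b * (D2 - D1) / (D1 * D2)) := by
    field_simp
    ring
  have hT1 : ‖((pz:ℂ) - (pw:ℂ)) * (starRingEnd ℂ) a / D1‖
      ≤ ((γ:ℝ) * 2^(γ-1)) * r * (1/m^(2*n)) := by
    rcases Nat.eq_zero_or_pos γ with hγ0 | hγ1
    · subst hγ0
      have : pz = pw := by simp [hpzdef, hpwdef]
      rw [this, sub_self, zero_mul, zero_div, norm_zero]
      positivity
    · have hcast : ((pz:ℂ) - (pw:ℂ)) = (((pz - pw : ℝ)):ℂ) := by push_cast; ring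
      rw [hcast, hD1def, norm_kernel_term _ _ _ (sub_nonneg.mpr hpwz) (by positivity)]
      have hstep1 : (pz - pw) * ‖a‖ / d1 ^ (2*n) ≤ (pz - pw) * (1/d1^(2*n-1)) := by
        rw [← hdivz _ (by linarith : (0:ℝ) ≤ pz - pw)]
        gcongr <;> linarith
      refine hstep1.trans ?_
      have hzw : ‖z‖ - ‖w‖ ≤ r := by
        rw [hrdef]
        exact norm_sub_norm_le z w
      have hpow : ‖z‖^γ - ‖w‖^γ ≤ (γ:ℝ) * ‖z‖^(γ-1) * r := by
        refine (pow_sub_pow_le_aux ‖z‖ ‖w‖ (norm_nonneg w) hwz γ).trans ?_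
        have h99 : (0:ℝ) ≤ (γ:ℝ) * ‖z‖^(γ-1) := by positivity
        exact mul_le_mul_of_nonneg_left hzw h99
      have hsub : pz - pw = (‖z‖^γ - ‖w‖^γ) / d0^γ := by
        rw [hpzdef, hpwdef, div_sub_div_same]
      have claimA : ‖z‖^(γ-1) / d0^γ * (1/d1^(2*n-1)) ≤ 2^(γ-1) * (1/m^(2*n)) := by
        have hlhs : ‖z‖^(γ-1) / d0^γ * (1/d1^(2*n-1)) = ‖z‖^(γ-1) / (d0^γ * d1^(2*n-1)) := by
          rw [div_mul_div_comm, mul_one]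
        have hrhs : (2:ℝ)^(γ-1) * (1/m^(2*n)) = 2^(γ-1) / m^(2*n) := by
          rw [mul_one_div]
        rw [hlhs, hrhs, div_le_div_iff₀ (by positivity) (by positivity)]
        rcases le_or_gt ‖z‖ (2 * d0) with hc | hc
        · have h1 : ‖z‖^(γ-1) ≤ 2^(γ-1) * d0^(γ-1) := by
            calc ‖z‖^(γ-1) ≤ (2*d0)^(γ-1) := pow_le_pow_left₀ (norm_nonneg z) hc _
              _ = 2^(γ-1) * d0^(γ-1) := mul_pow _ _ _
          have h2 : m^(2*n) ≤ d0 * d1^(2*n-1) := by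
            have e : m^(2*n) = m * m^(2*n-1) := by
              rw [← pow_succ']
              congr 1
              omega
            rw [e]
            exact mul_le_mul hmd0 (pow_le_pow_left₀ hm.le hmd1 _) (by positivity) hd0.le
          have h3 : d0^(γ-1) * (d0 * d1^(2*n-1)) = d0^γ * d1^(2*n-1) := by
            have e : d0^(γ-1) * d0 = d0^γ := by
              rw [← pow_succ]
              congr 1
              omega
            rw [← mul_assoc, e]
          calc ‖z‖^(γ-1) * m^(2*n) ≤ (2^(γ-1) * d0^(γ-1)) * (d0 * d1^(2*n-1)) :=
              mul_le_mul h1 h2 (by positivity) (by positivity)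
            _ = 2^(γ-1) * (d0^(γ-1) * (d0 * d1^(2*n-1))) := by ring
            _ = 2^(γ-1) * (d0^γ * d1^(2*n-1)) := by rw [h3]
        · have hd01 : d0 ≤ d1 := by linarith
          have hz2 : ‖z‖ ≤ 2 * d1 := by linarith
          have h1 : ‖z‖^(γ-1) ≤ 2^(γ-1) * d1^(γ-1) := by
            calc ‖z‖^(γ-1) ≤ (2*d1)^(γ-1) := pow_le_pow_left₀ (norm_nonneg z) hz2 _
              _ = 2^(γ-1) * d1^(γ-1) := mul_pow _ _ _
          have h2 : m^(2*n) ≤ d0^γ * d1^(2*n-γ) := by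
            have e : m^(2*n) = m^γ * m^(2*n-γ) := by
              rw [← pow_add]
              congr 1
              omega
            rw [e]
            exact mul_le_mul (pow_le_pow_left₀ hm.le hmd0 _)
              (pow_le_pow_left₀ hm.le hmd1 _) (by positivity) (by positivity)
          have h3 : d1^(γ-1) * (d0^γ * d1^(2*n-γ)) = d0^γ * d1^(2*n-1) := by
            have e : d1^(γ-1) * d1^(2*n-γ) = d1^(2*n-1) := by
              rw [← pow_add]
              congr 1
              omega
            calc d1^(γ-1) * (d0^γ * d1^(2*n-γ)) = d0^γ * (d1^(γ-1) * d1^(2*n-γ)) := by ring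
              _ = d0^γ * d1^(2*n-1) := by rw [e]
          calc ‖z‖^(γ-1) * m^(2*n) ≤ (2^(γ-1) * d1^(γ-1)) * (d0^γ * d1^(2*n-γ)) :=
              mul_le_mul h1 h2 (by positivity) (by positivity)
            _ = 2^(γ-1) * (d1^(γ-1) * (d0^γ * d1^(2*n-γ))) := by ring
            _ = 2^(γ-1) * (d0^γ * d1^(2*n-1)) := by rw [h3]
      calc (pz - pw) * (1/d1^(2*n-1))
          ≤ ((γ:ℝ) * ‖z‖^(γ-1) * r / d0^γ) * (1/d1^(2*n-1)) := by
            rw [hsub]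
            gcongr
          _ = ((γ:ℝ) * r) * (‖z‖^(γ-1) / d0^γ * (1/d1^(2*n-1))) := by ring
          _ ≤ ((γ:ℝ) * r) * (2^(γ-1) * (1/m^(2*n))) :=
            mul_le_mul_of_nonneg_left claimA (by positivity)
          _ = ((γ:ℝ) * 2^(γ-1)) * r * (1/m^(2*n)) := by ring
  have hT2 : ‖(pw:ℂ) * ((starRingEnd ℂ) a - (starRingEnd ℂ) b) / D1‖
      ≤ 2^(γ+1) * r * (1/m^(2*n)) := by
    have hconj : (starRingEnd ℂ) a - (starRingEnd ℂ) b = (starRingEnd ℂ) (a - b) :=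
      (map_sub _ _ _).symm
    rw [hconj, hD1def, norm_kernel_term _ _ _ hpw0 (by positivity)]
    calc pw * ‖a - b‖ / d1 ^ (2*n) ≤ pw * r / d1 ^ (2*n) := by gcongr
      _ = r * (pw * (1/d1^(2*n))) := by ring
      _ ≤ r * (pz * (1/d1^(2*n))) := by
          have : (0:ℝ) ≤ 1/d1^(2*n) := by positivity
          have := mul_le_mul_of_nonneg_right hpwz this
          exact mul_le_mul_of_nonneg_left this hr0
      _ ≤ r * (2^(γ+1) * (1/m^(2*n))) := mul_le_mul_of_nonneg_left matchz2n hr0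
      _ = 2^(γ+1) * r * (1/m^(2*n)) := by ring
  have hT3 : ‖(pw:ℂ) * (starRingEnd ℂ) b * (D2 - D1) / (D1 * D2)‖
      ≤ (2*(n:ℝ)) * 2^(γ+1) * r * (1/m^(2*n)) := by
    have hnorm : ‖(pw:ℂ) * (starRingEnd ℂ) b * (D2 - D1) / (D1 * D2)‖
        = pw * ‖b‖ * |d2^(2*n) - d1^(2*n)| / (d1^(2*n) * d2^(2*n)) := by
      rw [hD1def, hD2def]
      rw [norm_div, norm_mul, norm_mul, norm_mul, Complex.norm_real, RCLike.norm_conj]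
      have e1 : (((d2^(2*n):ℝ)):ℂ) - ((d1^(2*n):ℝ):ℂ) = (((d2^(2*n) - d1^(2*n) : ℝ)):ℂ) := by
        push_cast
        ring
      rw [e1, Complex.norm_real, Complex.norm_real, Complex.norm_real,
        Real.norm_of_nonneg hpw0, Real.norm_of_nonneg (by positivity : (0:ℝ) ≤ d1^(2*n)),
        Real.norm_of_nonneg (by positivity : (0:ℝ) ≤ d2^(2*n)), Real.norm_eq_abs]
    rw [hnorm]
    have habs : |d2 - d1| ≤ r := by
      have h := abs_norm_sub_norm_le (ζ - w) (ζ - z)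
      have e : (ζ - w) - (ζ - z) = z - w := by abel
      rw [e, ← hd2def, ← hd1def, ← hrdef] at h
      exact h
    rcases le_total d1 d2 with hc | hc
    · have hΔ : |d2^(2*n) - d1^(2*n)| ≤ (2*n:ℕ) * d2^(2*n-1) * r := by
        have h := abs_pow_sub_pow_le' d2 d1 hd2.le hd1.le (2*n)
        rw [max_eq_left hc] at h
        refine h.trans ?_
        gcongr
      have e : d2 * d2^(2*n-1) = d2^(2*n) := by
        rw [← pow_succ']
        congr 1
        omega
      calc pw * ‖b‖ * |d2^(2*n) - d1^(2*n)| / (d1^(2*n) * d2^(2*n))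
          ≤ pw * d2 * ((2*n:ℕ) * d2^(2*n-1) * r) / (d1^(2*n) * d2^(2*n)) := by gcongr
        _ = (2*(n:ℝ)) * r * (pw * (d2 * d2^(2*n-1)) * (1/(d1^(2*n) * d2^(2*n)))) := by
            push_cast
            ring
        _ = (2*(n:ℝ)) * r * (pw * d2^(2*n) * (1/(d1^(2*n) * d2^(2*n)))) := by rw [e]
        _ = (2*(n:ℝ)) * r * (pw * (1/d1^(2*n))) := by
            field_simp
        _ ≤ (2*(n:ℝ)) * r * (pz * (1/d1^(2*n))) := by
            have h5 : (0:ℝ) ≤ 1/d1^(2*n) := by positivity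
            have h6 := mul_le_mul_of_nonneg_right hpwz h5
            exact mul_le_mul_of_nonneg_left h6 (by positivity)
        _ ≤ (2*(n:ℝ)) * r * (2^(γ+1) * (1/m^(2*n))) :=
            mul_le_mul_of_nonneg_left matchz2n (by positivity)
        _ = (2*(n:ℝ)) * 2^(γ+1) * r * (1/m^(2*n)) := by ring
    · have hΔ : |d2^(2*n) - d1^(2*n)| ≤ (2*n:ℕ) * d1^(2*n-1) * r := by
        have h := abs_pow_sub_pow_le' d2 d1 hd2.le hd1.le (2*n)
        rw [max_eq_right hc] at h
        refine h.trans ?_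
        gcongr
      have e : d1 * d1^(2*n-1) = d1^(2*n) := by
        rw [← pow_succ']
        congr 1
        omega
      calc pw * ‖b‖ * |d2^(2*n) - d1^(2*n)| / (d1^(2*n) * d2^(2*n))
          ≤ pw * d2 * ((2*n:ℕ) * d1^(2*n-1) * r) / (d1^(2*n) * d2^(2*n)) := by gcongr
        _ = (2*(n:ℝ)) * r * (pw * (d2 * d1^(2*n-1)) * (1/(d1^(2*n) * d2^(2*n)))) := by
            push_cast
            ring
        _ ≤ (2*(n:ℝ)) * r * (pw * (d1 * d1^(2*n-1)) * (1/(d1^(2*n) * d2^(2*n)))) := by gcongr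
        _ = (2*(n:ℝ)) * r * (pw * d1^(2*n) * (1/(d1^(2*n) * d2^(2*n)))) := by rw [e]
        _ = (2*(n:ℝ)) * r * (pw * (1/d2^(2*n))) := by
            field_simp
        _ ≤ (2*(n:ℝ)) * r * (2^(γ+1) * (1/m^(2*n))) :=
            mul_le_mul_of_nonneg_left matchw2n (by positivity)
        _ = (2*(n:ℝ)) * 2^(γ+1) * r * (1/m^(2*n)) := by ring
  have hII : X ≤ ((γ:ℝ) * 2^(γ-1) + (2*(n:ℝ)+1) * 2^(γ+1)) * r * (1/m^(2*n)) := by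
    rw [hXdef, hdecomp]
    refine (norm_add_le _ _).trans ?_
    have h7 := norm_add_le ((pw:ℂ) * ((starRingEnd ℂ) a - (starRingEnd ℂ) b) / D1)
      ((pw:ℂ) * (starRingEnd ℂ) b * (D2 - D1) / (D1 * D2))
    have hexp : ((γ:ℝ) * 2^(γ-1) + (2*(n:ℝ)+1) * 2^(γ+1)) * r * (1/m^(2*n))
        = ((γ:ℝ) * 2^(γ-1)) * r * (1/m^(2*n)) + (2^(γ+1) * r * (1/m^(2*n))
          + (2*(n:ℝ)) * 2^(γ+1) * r * (1/m^(2*n))) := by ring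
    rw [hexp]
    linarith [hT1, hT2, hT3, h7]
  -- interpolation
  set B1 : ℝ := 2^(γ+2) with hB1def
  set B2 : ℝ := (γ:ℝ) * 2^(γ-1) + (2*(n:ℝ)+1) * 2^(γ+1) with hB2def
  have hB1pos : (0:ℝ) < B1 := by rw [hB1def]; positivity
  have hB2pos : (0:ℝ) < B2 := by
    rw [hB2def]
    have : (0:ℝ) ≤ (γ:ℝ) * 2^(γ-1) := by positivity
    have h9 : (0:ℝ) < (2*(n:ℝ)+1) * 2^(γ+1) := by positivity
    linarith
  have hB1one : (1:ℝ) ≤ B1 := by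
    rw [hB1def]
    exact one_le_pow₀ (by norm_num : (1:ℝ) ≤ 2)
  have hB2one : (1:ℝ) ≤ B2 := by
    rw [hB2def]
    have h9 : (1:ℝ) ≤ 2^(γ+1) := one_le_pow₀ (by norm_num : (1:ℝ) ≤ 2)
    have hn' : (1:ℝ) ≤ (n:ℝ) := by exact_mod_cast hn
    have h98 : (0:ℝ) ≤ (γ:ℝ) * 2^(γ-1) := by positivity
    have h97 : (1:ℝ) ≤ (2*(n:ℝ)+1) := by linarith
    have h96 : (1:ℝ) ≤ (2*(n:ℝ)+1) * 2^(γ+1) := by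
      calc (1:ℝ) = 1 * 1 := by norm_num
        _ ≤ (2*(n:ℝ)+1) * 2^(γ+1) := mul_le_mul h97 h9 (by norm_num) (by linarith)
    linarith
  set s : ℝ := 2*(n:ℝ) - 1 + α with hsdef
  have hs1 : (1:ℝ) ≤ s := by
    have hn' : (1:ℝ) ≤ (n:ℝ) := by exact_mod_cast hn
    rw [hsdef]
    linarith
  have hmsle : m ^ (-s) ≤ d1 ^ (-s) + d2 ^ (-s) + d0 ^ (-s) := by
    have p1 : (0:ℝ) ≤ d1 ^ (-s) := Real.rpow_nonneg hd1.le _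
    have p2 : (0:ℝ) ≤ d2 ^ (-s) := Real.rpow_nonneg hd2.le _
    have p0 : (0:ℝ) ≤ d0 ^ (-s) := Real.rpow_nonneg hd0.le _
    have hcases : m = d1 ∨ m = d2 ∨ m = d0 := by
      rcases le_total d1 (min d2 d0) with h | h
      · left; rw [hmdef, min_eq_left h]
      · rcases le_total d2 d0 with h2 | h2
        · right; left; rw [hmdef, min_eq_right h, min_eq_left h2]
        · right; right; rw [hmdef, min_eq_right h, min_eq_right h2]
    rcases hcases with h | h | h <;> rw [h] <;> linarith
  rcases hX0.eq_or_lt with hX00 | hXpos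
  · rw [← hX00]
    have : (0:ℝ) ≤ r ^ α := Real.rpow_nonneg hr0 _
    positivity
  · have e2 := Real.rpow_le_rpow hX0 hI (by linarith : (0:ℝ) ≤ 1 - α)
    have e3 := Real.rpow_le_rpow hX0 hII hα0
    have heq : (B1 * (1/m^(2*n-1))) ^ (1-α) * ((B2 * r) * (1/m^(2*n))) ^ α
        = B1^(1-α) * B2^α * r^α * m^(-s) := by
      have hmt1 : (1/m^(2*n-1) : ℝ) = m ^ (-(((2*n-1:ℕ)):ℝ)) := by
        rw [Real.rpow_neg hm.le, Real.rpow_natCast, one_div]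
      have hmt2 : (1/m^(2*n) : ℝ) = m ^ (-(((2*n:ℕ)):ℝ)) := by
        rw [Real.rpow_neg hm.le, Real.rpow_natCast, one_div]
      have hmm : m ^ (-(((2*n-1:ℕ)):ℝ) * (1-α)) * m ^ (-(((2*n:ℕ)):ℝ) * α) = m ^ (-s) := by
        rw [← Real.rpow_add hm]
        congr 1
        rw [Nat.cast_sub (by omega : 1 ≤ 2*n)]
        push_cast
        rw [hsdef]
        ring
      rw [hmt1, hmt2,
        Real.mul_rpow hB1pos.le (Real.rpow_nonneg hm.le _),
        Real.mul_rpow (by positivity) (Real.rpow_nonneg hm.le _),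
        Real.mul_rpow hB2pos.le hr0,
        ← Real.rpow_mul hm.le, ← Real.rpow_mul hm.le, ← hmm]
      ring
    have hIIfix : X ≤ (B2 * r) * (1/m^(2*n)) := by
      refine hII.trans (le_of_eq ?_)
      ring
    have e3' := Real.rpow_le_rpow hX0 hIIfix hα0
    calc X = X^(1-α) * X^α := by
          rw [← Real.rpow_add hXpos, sub_add_cancel, Real.rpow_one]
      _ ≤ (B1 * (1/m^(2*n-1))) ^ (1-α) * ((B2 * r) * (1/m^(2*n))) ^ α := by
          apply mul_le_mul e2 e3' (Real.rpow_nonneg hX0 _) (Real.rpow_nonneg (by positivity) _)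
      _ = B1^(1-α) * B2^α * r^α * m^(-s) := heq
      _ ≤ B1 * B2 * r^α * m^(-s) := by
          have hb1 : B1^(1-α) ≤ B1 := by
            calc B1^(1-α) ≤ B1^(1:ℝ) := Real.rpow_le_rpow_of_exponent_le hB1one (by linarith)
              _ = B1 := Real.rpow_one B1
          have hb2 : B2^α ≤ B2 := by
            calc B2^α ≤ B2^(1:ℝ) := Real.rpow_le_rpow_of_exponent_le hB2one hα1.le
              _ = B2 := Real.rpow_one B2
          have hra : (0:ℝ) ≤ r^α := Real.rpow_nonneg hr0 _
          have hms : (0:ℝ) ≤ m^(-s) := Real.rpow_nonneg hm.le _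
          have hb2nn : (0:ℝ) ≤ B2^α := Real.rpow_nonneg hB2pos.le _
          have h10 : B1^(1-α) * B2^α ≤ B1 * B2 :=
            mul_le_mul hb1 hb2 hb2nn hB1pos.le
          have h11 : (0:ℝ) ≤ r^α * m^(-s) := mul_nonneg hra hms
          calc B1^(1-α) * B2^α * r^α * m^(-s)
              = (B1^(1-α) * B2^α) * (r^α * m^(-s)) := by ring
            _ ≤ (B1 * B2) * (r^α * m^(-s)) := mul_le_mul_of_nonneg_right h10 h11
            _ = B1 * B2 * r^α * m^(-s) := by ring
      _ ≤ B1 * B2 * r^α * (d1^(-s) + d2^(-s) + d0^(-s)) := by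
          apply mul_le_mul_of_nonneg_left hmsle
          have hra : (0:ℝ) ≤ r^α := Real.rpow_nonneg hr0 _
          positivity


lemma measurable_rpow_neg' (s : ℝ) : Measurable fun x : ℝ => x ^ (-s) :=
  measurable_of_continuousOn_compl_singleton 0 fun x hx =>
    (Real.continuousAt_rpow_const x (-s) (Or.inl hx)).continuousWithinAt

lemma ahlfors_singleton {X : Type*} [NormedAddCommGroup X] [MeasurableSpace X] [BorelSpace X]
    (μ : Measure X) (n : ℕ) (C₀ R : ℝ) (hC₀ : 0 < C₀) (hR : 0 < R)
    (hAhlfors : ∀ (v : X) (ρ : ℝ), 0 < ρ → ρ ≤ R →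
      μ (ball v ρ) ≤ ENNReal.ofReal (C₀ * ρ ^ (2 * n)))
    (hn : 1 ≤ n) : ∀ v : X, μ {v} = 0 := by
  have hhalf : ∀ j : ℕ, R * (1/2:ℝ) ^ j ≤ R := by
    intro j
    have h := pow_le_one₀ (by norm_num : (0:ℝ) ≤ 1/2) (by norm_num : (1/2:ℝ) ≤ 1) (n := j)
    nlinarith
  intro v
  have hle : ∀ j : ℕ, μ {v} ≤ ENNReal.ofReal (C₀ * (R * (1/2) ^ j) ^ (2 * n)) := by
    intro j
    refine le_trans (measure_mono ?_) (hAhlfors v _ (by positivity) (hhalf j))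
    intro x hx
    rw [Set.mem_singleton_iff] at hx
    subst hx
    exact mem_ball_self (by positivity)
  have htend : Filter.Tendsto (fun j : ℕ => ENNReal.ofReal (C₀ * (R * (1/2) ^ j) ^ (2 * n)))
      Filter.atTop (nhds 0) := by
    have h1 : Filter.Tendsto (fun j : ℕ => (1/2:ℝ) ^ j) Filter.atTop (nhds 0) :=
      tendsto_pow_atTop_nhds_zero_of_lt_one (by norm_num) (by norm_num)
    have h2 : Continuous fun t : ℝ => ENNReal.ofReal (C₀ * (R * t) ^ (2 * n)) :=
      ENNReal.continuous_ofReal.comp (by continuity)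
    have h3 := (h2.tendsto 0).comp h1
    have h2n0' : 2 * n ≠ 0 := by omega
    simpa [Function.comp_def, zero_pow h2n0'] using h3
  exact le_antisymm (ge_of_tendsto htend (Filter.Eventually.of_forall hle)) zero_le

lemma unif_integral_bound {X : Type*} [NormedAddCommGroup X] [MeasurableSpace X] [BorelSpace X]
    (μ : Measure X) [IsFiniteMeasure μ]
    (n : ℕ) (C₀ R : ℝ) (hC₀ : 0 < C₀) (hR : 0 < R)
    (hAhlfors : ∀ (v : X) (ρ : ℝ), 0 < ρ → ρ ≤ R →
      μ (ball v ρ) ≤ ENNReal.ofReal (C₀ * ρ ^ (2 * n)))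
    (s : ℝ) (hs0 : 0 < s) (hs : s < 2 * n) :
    ∃ K : ℝ, 0 < K ∧ ∀ v : X,
      (∫⁻ ζ, ENNReal.ofReal (‖ζ - v‖ ^ (-s)) ∂μ) ≤ ENNReal.ofReal K := by
  have h2n0 : (0:ℝ) < 2 * n := lt_trans hs0 hs
  have hhalf : ∀ j : ℕ, R * (1/2:ℝ) ^ j ≤ R := by
    intro j
    have h := pow_le_one₀ (by norm_num : (0:ℝ) ≤ 1/2) (by norm_num : (1/2:ℝ) ≤ 1) (n := j)
    nlinarith
  have hn1 : 1 ≤ n := by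
    rcases Nat.eq_zero_or_pos n with h | h
    · subst h; norm_num at h2n0
    · exact h
  have hsing : ∀ v : X, μ {v} = 0 := ahlfors_singleton μ n C₀ R hC₀ hR hAhlfors hn1
  set ε : ℝ := 2 * n - s with hεdef
  have hε0 : 0 < ε := by simp only [hεdef]; linarith
  set Q : ℝ := (1/2 : ℝ) ^ ε with hQdef
  have hQ0 : 0 < Q := Real.rpow_pos_of_pos (by norm_num) ε
  have hQ1 : Q < 1 := Real.rpow_lt_one (by norm_num) (by norm_num) hε0
  have h1Q : 0 < 1 - Q := by linarith
  set c' : ℝ := C₀ * 2 ^ (2 * n) * R ^ ε with hc'def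
  have hc'0 : 0 < c' := by positivity
  set K : ℝ := R ^ (-s) * (μ Set.univ).toReal + c' * (1 - Q)⁻¹ + 1 with hKdef
  have hK0 : 0 < K := by
    have h1 : 0 ≤ R ^ (-s) * (μ Set.univ).toReal := by positivity
    have h2 : 0 < c' * (1 - Q)⁻¹ := by positivity
    simp only [hKdef]; linarith
  refine ⟨K, hK0, fun v => ?_⟩
  set f : X → ℝ≥0∞ := fun ζ => ENNReal.ofReal (‖ζ - v‖ ^ (-s)) with hfdef
  set ρ : ℕ → ℝ := fun j => R * (1/2) ^ j with hρdef
  have hρpos : ∀ k, 0 < ρ k := fun k => by simp only [hρdef]; positivity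
  have hρR : ∀ k, ρ k ≤ R := fun k => hhalf k
  have hρsucc : ∀ k, ρ k = 2 * ρ (k + 1) := by
    intro k
    simp only [hρdef, pow_succ]
    ring
  set A : ℕ → Set X := fun j => ball v (ρ j) \ ball v (ρ (j + 1)) with hAdef
  have hkey : ∀ j : ℕ, ρ (j+1) ^ (-s) * (C₀ * ρ j ^ (2 * n)) ≤ c' * Q ^ j := by
    intro j
    have hρ1 : 0 < ρ (j+1) := hρpos _
    have e1 : ρ j ^ (2*n) = 2 ^ (2*n) * ρ (j+1) ^ (2*n) := by rw [hρsucc j, mul_pow]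
    have e2 : ρ (j+1) ^ (((2*n : ℕ)):ℝ) * ρ (j+1) ^ (-s) = ρ (j+1) ^ ε := by
      rw [← Real.rpow_add hρ1]
      congr 1
      push_cast
      simp only [hεdef]
      ring
    have e3 : ρ (j+1) ^ ε = R ^ ε * Q ^ (j+1) := by
      have h12 : ((1/2:ℝ) ^ ((j+1 : ℕ))) ^ ε = Q ^ (j+1) := by
        rw [← Real.rpow_natCast (1/2:ℝ) (j+1), ← Real.rpow_mul (by norm_num),
          mul_comm (((j+1:ℕ)):ℝ) ε, Real.rpow_mul (by norm_num), Real.rpow_natCast]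
      show (R * (1/2:ℝ) ^ (j+1)) ^ ε = R ^ ε * Q ^ (j+1)
      rw [Real.mul_rpow hR.le (by positivity), h12]
    calc ρ (j+1) ^ (-s) * (C₀ * ρ j ^ (2*n))
        = C₀ * 2 ^ (2*n) * (ρ (j+1) ^ (((2*n:ℕ)):ℝ) * ρ (j+1) ^ (-s)) := by
          rw [e1, Real.rpow_natCast]; ring
      _ = C₀ * 2 ^ (2*n) * (R ^ ε * Q ^ (j+1)) := by rw [e2, e3]
      _ = c' * Q ^ j * Q := by simp only [hc'def, pow_succ]; ring
      _ ≤ c' * Q ^ j * 1 := by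
          apply mul_le_mul_of_nonneg_left hQ1.le (by positivity)
      _ = c' * Q ^ j := mul_one _
  have hannulus : ∀ j, (∫⁻ ζ in A j, f ζ ∂μ) ≤ ENNReal.ofReal c' * ENNReal.ofReal Q ^ j := by
    intro j
    have hptwise : ∀ ζ ∈ A j, f ζ ≤ ENNReal.ofReal (ρ (j+1) ^ (-s)) := by
      intro ζ hζ
      apply ENNReal.ofReal_le_ofReal
      apply Real.rpow_le_rpow_of_nonpos (hρpos (j+1)) _ (neg_nonpos.mpr hs0.le)
      have h := hζ.2
      rw [mem_ball, not_lt, dist_eq_norm] at h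
      exact h
    calc (∫⁻ ζ in A j, f ζ ∂μ)
        ≤ ∫⁻ _ in A j, ENNReal.ofReal (ρ (j+1) ^ (-s)) ∂μ :=
          setLIntegral_mono measurable_const hptwise
      _ = ENNReal.ofReal (ρ (j+1) ^ (-s)) * μ (A j) := setLIntegral_const _ _
      _ ≤ ENNReal.ofReal (ρ (j+1) ^ (-s)) * ENNReal.ofReal (C₀ * ρ j ^ (2 * n)) :=
          mul_le_mul_right
            (le_trans (measure_mono Set.diff_subset) (hAhlfors v _ (hρpos j) (hρR j))) _
      _ = ENNReal.ofReal (ρ (j+1) ^ (-s) * (C₀ * ρ j ^ (2 * n))) := by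
          rw [← ENNReal.ofReal_mul (by positivity)]
      _ ≤ ENNReal.ofReal (c' * Q ^ j) := ENNReal.ofReal_le_ofReal (hkey j)
      _ = ENNReal.ofReal c' * ENNReal.ofReal Q ^ j := by
          rw [ENNReal.ofReal_mul hc'0.le, ENNReal.ofReal_pow hQ0.le]
  have hcover : ball v R ⊆ {v} ∪ ⋃ j, A j := by
    intro ζ hζ
    by_cases hv : ζ = v
    · exact Or.inl (by simp [hv])
    · right
      have hd0 : 0 < dist ζ v := dist_pos.mpr hv
      have hdR : dist ζ v < R := mem_ball.mp hζ
      have hex : ∃ j : ℕ, ρ (j+1) ≤ dist ζ v := by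
        obtain ⟨j, hj⟩ := exists_pow_lt_of_lt_one (div_pos hd0 hR) (by norm_num : (1/2:ℝ) < 1)
        refine ⟨j, ?_⟩
        have h1 : ρ j < dist ζ v := by
          rw [lt_div_iff₀ hR] at hj
          show R * (1/2:ℝ) ^ j < dist ζ v
          linarith [hj]
        have h2 : ρ (j+1) ≤ ρ j := by
          have h3 : (0:ℝ) ≤ (1/2:ℝ) ^ j := by positivity
          simp only [hρdef, pow_succ]
          nlinarith
        linarith
      set j₀ := Nat.find hex with hj₀def
      have h1 : ρ (j₀+1) ≤ dist ζ v := Nat.find_spec hex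
      have h2 : dist ζ v < ρ j₀ := by
        rcases Nat.eq_zero_or_pos j₀ with h | h
        · rw [h]
          show dist ζ v < R * (1/2:ℝ) ^ (0:ℕ)
          simpa using hdR
        · have h3 := Nat.find_min hex (m := j₀ - 1) (by omega)
          push_neg at h3
          have h4 : j₀ - 1 + 1 = j₀ := by omega
          rwa [h4] at h3
      exact Set.mem_iUnion.mpr ⟨j₀, ⟨mem_ball.mpr h2, by simp [mem_ball, not_lt, h1]⟩⟩
  have hcompl : (∫⁻ ζ in (ball v R)ᶜ, f ζ ∂μ) ≤
      ENNReal.ofReal (R ^ (-s) * (μ Set.univ).toReal) := by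
    calc (∫⁻ ζ in (ball v R)ᶜ, f ζ ∂μ)
        ≤ ∫⁻ _ in (ball v R)ᶜ, ENNReal.ofReal (R ^ (-s)) ∂μ := by
          apply setLIntegral_mono measurable_const
          intro ζ hζ
          apply ENNReal.ofReal_le_ofReal
          apply Real.rpow_le_rpow_of_nonpos hR _ (neg_nonpos.mpr hs0.le)
          rw [Set.mem_compl_iff, mem_ball, not_lt, dist_eq_norm] at hζ
          exact hζ
      _ = ENNReal.ofReal (R ^ (-s)) * μ ((ball v R)ᶜ) := setLIntegral_const _ _
      _ ≤ ENNReal.ofReal (R ^ (-s)) * μ Set.univ :=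
          mul_le_mul_right (measure_mono (Set.subset_univ _)) _
      _ = ENNReal.ofReal (R ^ (-s) * (μ Set.univ).toReal) := by
          rw [ENNReal.ofReal_mul (by positivity), ENNReal.ofReal_toReal (measure_ne_top μ _)]
  have hball : (∫⁻ ζ in ball v R, f ζ ∂μ) ≤ ENNReal.ofReal (c' * (1 - Q)⁻¹) := by
    calc (∫⁻ ζ in ball v R, f ζ ∂μ)
        ≤ ∫⁻ ζ in ({v} ∪ ⋃ j, A j), f ζ ∂μ := lintegral_mono_set hcover
      _ ≤ (∫⁻ ζ in ({v} : Set X), f ζ ∂μ) + ∫⁻ ζ in (⋃ j, A j), f ζ ∂μ :=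
          lintegral_union_le _ _ _
      _ = ∫⁻ ζ in (⋃ j, A j), f ζ ∂μ := by
          rw [Measure.restrict_eq_zero.mpr (hsing v), lintegral_zero_measure, zero_add]
      _ ≤ ∑' j, ∫⁻ ζ in A j, f ζ ∂μ := lintegral_iUnion_le _ _
      _ ≤ ∑' j : ℕ, ENNReal.ofReal c' * ENNReal.ofReal Q ^ j := ENNReal.tsum_le_tsum hannulus
      _ = ENNReal.ofReal c' * (1 - ENNReal.ofReal Q)⁻¹ := by
          rw [ENNReal.tsum_mul_left, ENNReal.tsum_geometric]
      _ = ENNReal.ofReal (c' * (1 - Q)⁻¹) := by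
          rw [ENNReal.ofReal_mul hc'0.le, ENNReal.ofReal_inv_of_pos h1Q,
            ENNReal.ofReal_sub 1 hQ0.le, ENNReal.ofReal_one]
  calc (∫⁻ ζ, f ζ ∂μ)
      = (∫⁻ ζ in ball v R, f ζ ∂μ) + ∫⁻ ζ in (ball v R)ᶜ, f ζ ∂μ :=
        (lintegral_add_compl f measurableSet_ball).symm
    _ ≤ ENNReal.ofReal (c' * (1 - Q)⁻¹) + ENNReal.ofReal (R ^ (-s) * (μ Set.univ).toReal) :=
        add_le_add hball hcompl
    _ ≤ ENNReal.ofReal K := by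
        rw [← ENNReal.ofReal_add (by positivity) (by positivity)]
        apply ENNReal.ofReal_le_ofReal
        simp only [hKdef]
        linarith


/-- Hölder-type estimate for the difference of the Andersson–Samuelsson model kernel
`k̃_γ(ζ,z) = (‖z‖^γ/‖ζ‖^γ) · conj(ζᵢ - zᵢ)/‖ζ-z‖^{2n}` at two points `z, w`:
the `μ`-integral of `|k̃_γ(ζ,z) − k̃_γ(ζ,w)|` is bounded by `C ‖z-w‖^α` for every `α < 1`. -/
theorem koppelman_kernel_difference_holder
    (n N : ℕ) (hn : 1 ≤ n) (hN : 1 ≤ N)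
    [MeasurableSpace (EuclideanSpace ℂ (Fin N))] [BorelSpace (EuclideanSpace ℂ (Fin N))]
    (μ : Measure (EuclideanSpace ℂ (Fin N))) [IsFiniteMeasure μ]
    (R₁ : ℝ) (hsupp : μ ((closedBall (0 : EuclideanSpace ℂ (Fin N)) R₁)ᶜ) = 0)
    (C₀ R : ℝ) (hC₀ : 0 < C₀) (hR : 0 < R)
    (hAhlfors : ∀ (w : EuclideanSpace ℂ (Fin N)) (ρ : ℝ), 0 < ρ → ρ ≤ R →
      μ (ball w ρ) ≤ ENNReal.ofReal (C₀ * ρ ^ (2 * n)))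
    (γ : ℕ) (hγ : γ < 2 * n) (i : Fin N)
    (ktilde : EuclideanSpace ℂ (Fin N) → EuclideanSpace ℂ (Fin N) → ℂ)
    (hktilde : ∀ ζ z, ktilde ζ z =
      ((‖z‖ ^ γ / ‖ζ‖ ^ γ : ℝ) : ℂ) * (starRingEnd ℂ) (ζ i - z i) /
        ((‖ζ - z‖ ^ (2 * n) : ℝ) : ℂ)) :
    ∀ (α : ℝ), 0 ≤ α → α < 1 → ∀ R₀ : ℝ, 0 < R₀ →
      ∃ C : ℝ, 0 < C ∧
        ∀ z ∈ closedBall (0 : EuclideanSpace ℂ (Fin N)) R₀,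
          ∀ w ∈ closedBall (0 : EuclideanSpace ℂ (Fin N)) R₀,
            z ≠ w → z ≠ 0 → w ≠ 0 →
              (∫⁻ ζ, ENNReal.ofReal ‖ktilde ζ z - ktilde ζ w‖ ∂μ) ≤
                ENNReal.ofReal (C * ‖z - w‖ ^ α) := by
  intro α hα0 hα1 R₀ hR₀
  have hn' : (1:ℝ) ≤ (n:ℝ) := by exact_mod_cast hn
  set s : ℝ := 2*(n:ℝ) - 1 + α with hsdef
  have hs0 : 0 < s := by rw [hsdef]; linarith
  have hs2n : s < 2*(n:ℝ) := by rw [hsdef]; linarith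
  obtain ⟨K, hK0, hKbound⟩ := unif_integral_bound μ n C₀ R hC₀ hR hAhlfors s hs0 hs2n
  set B : ℝ := (2:ℝ)^(γ+2) * ((γ:ℝ) * 2^(γ-1) + (2*(n:ℝ)+1) * 2^(γ+1)) with hBdef
  have hBpos : 0 < B := by
    rw [hBdef]
    have h1 : (0:ℝ) ≤ (γ:ℝ)*2^(γ-1) := by positivity
    have h2 : (0:ℝ) < (2*(n:ℝ)+1)*2^(γ+1) := by positivity
    have h3 : (0:ℝ) < (2:ℝ)^(γ+2) := by positivity
    exact mul_pos h3 (by linarith)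
  refine ⟨B * (3*K), by positivity, ?_⟩
  intro z hzball w hwball hzw hz0 hw0
  have hsing : ∀ v : EuclideanSpace ℂ (Fin N), μ {v} = 0 :=
    ahlfors_singleton μ n C₀ R hC₀ hR hAhlfors hn
  have hae : ∀ᵐ ζ ∂μ, ζ ≠ z ∧ ζ ≠ w ∧ ζ ≠ 0 := by
    have h1 : ∀ᵐ ζ ∂μ, ζ ≠ z := by
      rw [MeasureTheory.ae_iff]
      simpa only [ne_eq, not_not, Set.setOf_eq_eq_singleton] using hsing z
    have h2 : ∀ᵐ ζ ∂μ, ζ ≠ w := by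
      rw [MeasureTheory.ae_iff]
      simpa only [ne_eq, not_not, Set.setOf_eq_eq_singleton] using hsing w
    have h3 : ∀ᵐ ζ ∂μ, ζ ≠ 0 := by
      rw [MeasureTheory.ae_iff]
      simpa only [ne_eq, not_not, Set.setOf_eq_eq_singleton] using hsing 0
    exact h1.and (h2.and h3)
  have hptae : ∀ᵐ ζ ∂μ, ENNReal.ofReal ‖ktilde ζ z - ktilde ζ w‖ ≤
      ENNReal.ofReal (B * ‖z - w‖^α * (‖ζ - z‖^(-s) + ‖ζ - w‖^(-s) + ‖ζ‖^(-s))) := by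
    filter_upwards [hae] with ζ hζ
    obtain ⟨hζz, hζw, hζ0⟩ := hζ
    apply ENNReal.ofReal_le_ofReal
    rw [hktilde ζ z, hktilde ζ w]
    rcases le_total ‖w‖ ‖z‖ with hc | hc
    · have hkey := key_pointwise n γ hn hγ i α hα0 hα1 z w ζ hc hζz hζw hζ0
      rw [← hsdef, ← hBdef] at hkey
      exact hkey
    · have hkey := key_pointwise n γ hn hγ i α hα0 hα1 w z ζ hc hζw hζz hζ0
      rw [← hsdef, ← hBdef] at hkey
      rw [norm_sub_rev]
      refine hkey.trans (le_of_eq ?_)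
      rw [norm_sub_rev w z]
      ring
  have hmeas1 : Measurable (fun ζ : EuclideanSpace ℂ (Fin N) =>
      ENNReal.ofReal (‖ζ - z‖ ^ (-s))) :=
    ENNReal.measurable_ofReal.comp ((measurable_rpow_neg' s).comp
      ((continuous_id.sub continuous_const).norm.measurable))
  have hmeas2 : Measurable (fun ζ : EuclideanSpace ℂ (Fin N) =>
      ENNReal.ofReal (‖ζ - w‖ ^ (-s))) :=
    ENNReal.measurable_ofReal.comp ((measurable_rpow_neg' s).comp
      ((continuous_id.sub continuous_const).norm.measurable))
  have hra : (0:ℝ) ≤ ‖z - w‖^α := Real.rpow_nonneg (norm_nonneg _) _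
  have hBra : (0:ℝ) ≤ B * ‖z - w‖^α := mul_nonneg hBpos.le hra
  calc (∫⁻ ζ, ENNReal.ofReal ‖ktilde ζ z - ktilde ζ w‖ ∂μ)
      ≤ ∫⁻ ζ, ENNReal.ofReal
          (B * ‖z - w‖^α * (‖ζ - z‖^(-s) + ‖ζ - w‖^(-s) + ‖ζ‖^(-s))) ∂μ :=
        lintegral_mono_ae hptae
    _ = ∫⁻ ζ, ENNReal.ofReal (B * ‖z - w‖^α) *
          ENNReal.ofReal (‖ζ - z‖^(-s) + ‖ζ - w‖^(-s) + ‖ζ‖^(-s)) ∂μ := by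
        apply lintegral_congr
        intro ζ
        rw [ENNReal.ofReal_mul hBra]
    _ = ENNReal.ofReal (B * ‖z - w‖^α) *
          ∫⁻ ζ, ENNReal.ofReal (‖ζ - z‖^(-s) + ‖ζ - w‖^(-s) + ‖ζ‖^(-s)) ∂μ :=
        lintegral_const_mul' _ _ ENNReal.ofReal_ne_top
    _ ≤ ENNReal.ofReal (B * ‖z - w‖^α) *
          (ENNReal.ofReal K + ENNReal.ofReal K + ENNReal.ofReal K) := by
        apply mul_le_mul_right
        have hsplit : (∫⁻ ζ, ENNReal.ofReal
            (‖ζ - z‖^(-s) + ‖ζ - w‖^(-s) + ‖ζ‖^(-s)) ∂μ)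
            = (∫⁻ ζ, (ENNReal.ofReal (‖ζ - z‖^(-s)) + ENNReal.ofReal (‖ζ - w‖^(-s))
              + ENNReal.ofReal (‖ζ‖^(-s))) ∂μ) := by
          apply lintegral_congr
          intro ζ
          rw [ENNReal.ofReal_add (by positivity) (Real.rpow_nonneg (norm_nonneg _) _),
            ENNReal.ofReal_add (Real.rpow_nonneg (norm_nonneg _) _)
              (Real.rpow_nonneg (norm_nonneg _) _)]
        rw [hsplit]
        rw [lintegral_add_left (f := fun ζ => ENNReal.ofReal (‖ζ - z‖^(-s)) + ENNReal.ofReal (‖ζ - w‖^(-s)))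
          (hmeas1.add hmeas2), lintegral_add_left hmeas1]
        have h3rd : (∫⁻ ζ, ENNReal.ofReal (‖ζ‖^(-s)) ∂μ) ≤ ENNReal.ofReal K := by
          have := hKbound 0
          simpa using this
        exact add_le_add (add_le_add (hKbound z) (hKbound w)) h3rd
    _ = ENNReal.ofReal (B * (3*K) * ‖z - w‖^α) := by
        rw [← ENNReal.ofReal_add hK0.le hK0.le, ← ENNReal.ofReal_add (by linarith) hK0.le,
          ← ENNReal.ofReal_mul hBra]
        congr 1
        ring
end

section
/- Let n ≥ 1 and N ≥ 1 be integers, and let μ be a Borel measure on ℂ^N for which there are constants C₀ > 0 and R > 0 with μ(B_ρ(w)) ≤ C₀ ρ^{2n} for every w ∈ ℂ^N and every 0 < ρ ≤ R. For an integer k ≥ 1 set r_k := exp(−e^k). Then ∫_{{ ζ : r_{k+1} ≤ ‖ζ‖ ≤ r_k }} dμ(ζ) / ( ‖ζ‖^{2n} · |log ‖ζ‖|^{2n} ) → 0 as k → ∞. -/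
open MeasureTheory Metric Filter
open scoped NNReal ENNReal Topology

/-- The `L^{2n}`-norm (to the `2n`-th power) of the derivative of the logarithmic
cut-off functions tends to `0`: the integral of `1/(‖ζ‖^{2n} |log ‖ζ‖|^{2n})` over the
annulus `{r_{k+1} ≤ ‖ζ‖ ≤ r_k}`, `r_k = exp(−e^k)`, tends to `0` as `k → ∞`, for a
measure with an upper Ahlfors regularity bound of exponent `2n`. -/
theorem cutoff_derivative_L2n_tendsto_zero
    (n N : ℕ) (hn : 1 ≤ n) (hN : 1 ≤ N)
    [MeasurableSpace (EuclideanSpace ℂ (Fin N))] [BorelSpace (EuclideanSpace ℂ (Fin N))]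
    (μ : Measure (EuclideanSpace ℂ (Fin N)))
    (C₀ R : ℝ) (hC₀ : 0 < C₀) (hR : 0 < R)
    (hAhlfors : ∀ (w : EuclideanSpace ℂ (Fin N)) (ρ : ℝ), 0 < ρ → ρ ≤ R →
      μ (ball w ρ) ≤ ENNReal.ofReal (C₀ * ρ ^ (2 * n))) :
    Tendsto
      (fun k : ℕ =>
        ∫⁻ ζ in {ζ : EuclideanSpace ℂ (Fin N) |
            Real.exp (-Real.exp (k + 1)) ≤ ‖ζ‖ ∧ ‖ζ‖ ≤ Real.exp (-Real.exp k)},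
          ENNReal.ofReal (1 / (‖ζ‖ ^ (2 * n) * |Real.log ‖ζ‖| ^ (2 * n))) ∂μ)
      atTop (𝓝 0) := by
  set F : EuclideanSpace ℂ (Fin N) → ℝ≥0∞ := fun ζ =>
    ENNReal.ofReal (1 / (‖ζ‖ ^ (2 * n) * |Real.log ‖ζ‖| ^ (2 * n))) with hF
  set S : ℕ → Set (EuclideanSpace ℂ (Fin N)) := fun j =>
    {ζ | Real.exp (-((j : ℝ) + 1)) ≤ ‖ζ‖ ∧ ‖ζ‖ ≤ Real.exp (-(j : ℝ))} with hS
  set m : ℕ → ℕ := fun k => ⌊Real.exp k⌋₊ with hm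
  set g : ℕ → ℝ≥0∞ := fun j =>
    ENNReal.ofReal (C₀ * (2 * Real.exp 1) ^ (2 * n) / (j : ℝ) ^ (2 * n)) with hg
  -- summability of g
  have hsum : Summable (fun j : ℕ => C₀ * (2 * Real.exp 1) ^ (2 * n) / (j : ℝ) ^ (2 * n)) := by
    have h1 : Summable (fun j : ℕ => 1 / (j : ℝ) ^ (2 * n)) :=
      (Real.summable_one_div_nat_pow).2 (by omega)
    have := h1.mul_left (C₀ * (2 * Real.exp 1) ^ (2 * n))
    simpa [div_eq_mul_inv, one_div, mul_assoc] using this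
  have hgtop : ∑' j, g j ≠ ∞ := by
    rw [hg, ← ENNReal.ofReal_tsum_of_nonneg (fun j => by positivity) hsum]
    exact ENNReal.ofReal_ne_top
  have htail : Tendsto (fun i => ∑' j, g (j + i)) atTop (𝓝 0) :=
    ENNReal.tendsto_sum_nat_add g hgtop
  -- m tends to infinity
  have hmt : Tendsto m atTop atTop := by
    apply tendsto_nat_floor_atTop.comp
    exact Real.tendsto_exp_atTop.comp tendsto_natCast_atTop_atTop
  -- m k ≥ 1 always
  have hm1 : ∀ k, 1 ≤ m k := by
    intro k
    exact Nat.le_floor (by simpa using Real.one_le_exp (Nat.cast_nonneg k))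
  -- choose J with the radius condition
  have hRtend : Tendsto (fun j : ℕ => 2 * Real.exp (-(j : ℝ))) atTop (𝓝 0) := by
    have h1 : Tendsto (fun j : ℕ => Real.exp (-(j : ℝ))) atTop (𝓝 0) :=
      Real.tendsto_exp_atBot.comp (tendsto_neg_atBot_iff.mpr tendsto_natCast_atTop_atTop)
    simpa using h1.const_mul 2
  obtain ⟨J, hJ⟩ := eventually_atTop.1 (hRtend.eventually_lt_const hR)
  -- the per-shell bound
  have hshell : ∀ j' : ℕ, 1 ≤ j' → 2 * Real.exp (-(j' : ℝ)) ≤ R →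
      ∫⁻ ζ in S j', F ζ ∂μ ≤ g j' := by
    intro j' hj1 hjR
    have hj'pos : (0 : ℝ) < (j' : ℝ) := by exact_mod_cast hj1
    have hSsub : S j' ⊆ ball 0 (2 * Real.exp (-(j' : ℝ))) := by
      intro x hx
      rw [mem_ball_zero_iff]
      have := hx.2
      nlinarith [Real.exp_pos (-(j' : ℝ))]
    have hμS : μ (S j') ≤ ENNReal.ofReal (C₀ * (2 * Real.exp (-(j' : ℝ))) ^ (2 * n)) :=
      le_trans (measure_mono hSsub) (hAhlfors 0 _ (by positivity) hjR)
    set c : ℝ := 1 / (Real.exp (-((j' : ℝ) + 1)) ^ (2 * n) * (j' : ℝ) ^ (2 * n)) with hc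
    have hc0 : 0 ≤ c := by positivity
    have hpt : ∀ x ∈ S j', F x ≤ ENNReal.ofReal c := by
      intro x hx
      have hx0 : 0 < ‖x‖ := lt_of_lt_of_le (Real.exp_pos _) hx.1
      have hlog : (j' : ℝ) ≤ |Real.log ‖x‖| := by
        have h1 : Real.log ‖x‖ ≤ -(j' : ℝ) := by
          have := Real.log_le_log hx0 hx.2
          simpa [Real.log_exp] using this
        have h2 : (j' : ℝ) ≤ -Real.log ‖x‖ := by linarith
        exact h2.trans (neg_le_abs _)
      have hden : Real.exp (-((j' : ℝ) + 1)) ^ (2 * n) * (j' : ℝ) ^ (2 * n) ≤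
          ‖x‖ ^ (2 * n) * |Real.log ‖x‖| ^ (2 * n) := by
        apply mul_le_mul
        · exact pow_le_pow_left₀ (Real.exp_pos _).le hx.1 _
        · exact pow_le_pow_left₀ hj'pos.le hlog _
        · positivity
        · positivity
      exact ENNReal.ofReal_le_ofReal
        (one_div_le_one_div_of_le (by positivity) hden)
    calc ∫⁻ ζ in S j', F ζ ∂μ
        ≤ ∫⁻ _ in S j', ENNReal.ofReal c ∂μ := setLIntegral_mono measurable_const hpt
      _ = ENNReal.ofReal c * μ (S j') := setLIntegral_const _ _
      _ ≤ ENNReal.ofReal c * ENNReal.ofReal (C₀ * (2 * Real.exp (-(j' : ℝ))) ^ (2 * n)) :=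
          mul_le_mul_right hμS _
      _ = ENNReal.ofReal (c * (C₀ * (2 * Real.exp (-(j' : ℝ))) ^ (2 * n))) :=
          (ENNReal.ofReal_mul hc0).symm
      _ = g j' := by
          rw [hg]
          congr 1
          rw [hc]
          have e1 : Real.exp (-((j' : ℝ) + 1)) = (Real.exp (j' : ℝ) * Real.exp 1)⁻¹ := by
            rw [← Real.exp_add, ← Real.exp_neg]
          have e2 : Real.exp (-(j' : ℝ)) = (Real.exp (j' : ℝ))⁻¹ := Real.exp_neg _
          rw [e1, e2]
          have hexp : Real.exp (j' : ℝ) ≠ 0 := (Real.exp_pos _).ne'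
          have hexp1 : Real.exp 1 ≠ 0 := (Real.exp_pos _).ne'
          have hj'ne : (j' : ℝ) ≠ 0 := hj'pos.ne'
          field_simp
          have h3 : Real.exp 1 ^ (2 * n) * (Real.exp 1)⁻¹ ^ (2 * n) = 1 := by
            rw [← mul_pow, mul_inv_cancel₀ hexp1, one_pow]
          linear_combination (-((Real.exp (j' : ℝ))⁻¹ ^ (2 * n) * 2 ^ (2 * n))) * h3
  -- main eventual bound
  have key : ∀ᶠ k : ℕ in atTop,
      (∫⁻ ζ in {ζ : EuclideanSpace ℂ (Fin N) |
          Real.exp (-Real.exp (k + 1)) ≤ ‖ζ‖ ∧ ‖ζ‖ ≤ Real.exp (-Real.exp k)}, F ζ ∂μ)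
        ≤ ∑' j, g (j + m k) := by
    filter_upwards [hmt.eventually_ge_atTop J] with k hkJ
    -- cover the annulus by shells
    have hcover : {ζ : EuclideanSpace ℂ (Fin N) |
        Real.exp (-Real.exp (k + 1)) ≤ ‖ζ‖ ∧ ‖ζ‖ ≤ Real.exp (-Real.exp k)} ⊆
        ⋃ j : ℕ, S (j + m k) := by
      intro x hx
      have hx0 : 0 < ‖x‖ := lt_of_lt_of_le (Real.exp_pos _) hx.1
      set t : ℝ := -Real.log ‖x‖ with htdef
      have ht : Real.exp k ≤ t := by
        have := Real.log_le_log hx0 hx.2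
        simp only [Real.log_exp] at this
        linarith
      have ht0 : 0 ≤ t := le_trans (Real.exp_pos _).le ht
      set j₀ : ℕ := ⌊t⌋₊ with hj₀def
      have hj₀m : m k ≤ j₀ := Nat.floor_mono ht
      have hmem : x ∈ S j₀ := by
        constructor
        · have h1 : t < (j₀ : ℝ) + 1 := Nat.lt_floor_add_one t
          have h2 : -((j₀ : ℝ) + 1) ≤ Real.log ‖x‖ := by
            simp only [htdef] at h1; linarith
          calc Real.exp (-((j₀ : ℝ) + 1)) ≤ Real.exp (Real.log ‖x‖) := Real.exp_le_exp.2 h2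
            _ = ‖x‖ := Real.exp_log hx0
        · have h1 : (j₀ : ℝ) ≤ t := Nat.floor_le ht0
          have h2 : Real.log ‖x‖ ≤ -(j₀ : ℝ) := by
            simp only [htdef] at h1; linarith
          calc ‖x‖ = Real.exp (Real.log ‖x‖) := (Real.exp_log hx0).symm
            _ ≤ Real.exp (-(j₀ : ℝ)) := Real.exp_le_exp.2 h2
      refine Set.mem_iUnion.2 ⟨j₀ - m k, ?_⟩
      rwa [Nat.sub_add_cancel hj₀m]
    calc (∫⁻ ζ in {ζ : EuclideanSpace ℂ (Fin N) |
          Real.exp (-Real.exp (k + 1)) ≤ ‖ζ‖ ∧ ‖ζ‖ ≤ Real.exp (-Real.exp k)}, F ζ ∂μ)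
        ≤ ∫⁻ ζ in ⋃ j : ℕ, S (j + m k), F ζ ∂μ := lintegral_mono_set hcover
      _ ≤ ∑' j : ℕ, ∫⁻ ζ in S (j + m k), F ζ ∂μ := lintegral_iUnion_le _ _
      _ ≤ ∑' j : ℕ, g (j + m k) := by
          apply ENNReal.tsum_le_tsum
          intro j
          apply hshell
          · have := hm1 k; omega
          · have hJle : J ≤ j + m k := le_trans hkJ (Nat.le_add_left _ _)
            exact (hJ _ hJle).le
  exact tendsto_of_tendsto_of_tendsto_of_le_of_le' tendsto_const_nhds (htail.comp hmt)
    (Eventually.of_forall fun k => zero_le) key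
end
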